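/- arXiv:2303.12562 — 4 statements merged into one kernel-verified Lean document; each statement's English description precedes it below -/
import Mathlib

section
/- There exist two sequences of polynomials (x_k) and (y_k) in C[s1,s2,s3,x,y] (graded by deg s_i = 1, deg x = deg y = 0) with x_0 = x, y_0 = y, such that for every k ≥ 1: x_k and y_k lie in the intersection of the span of monomials of s-degree ≤ k with the ideal (x,y); x_k − x_{k−1} and y_k − y_{k−1} are homogeneous of s-degree k; and x_k·y_k − (xy + s1·x² + s2·y² + s3·x²y²) lies in (s1,s2,s3)^{k+1} ∩ (x,y)². -/
open MvPolynomial

noncomputable section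

/-- The ring `R = ℂ[s₁,s₂,s₃,x,y]`, with variables `0,1,2 ↦ s₁,s₂,s₃` and `3,4 ↦ x,y`. -/
abbrev R0 : Type := MvPolynomial (Fin 5) ℂ

/-- The weights: `deg sᵢ = 1`, `deg x = deg y = 0`. -/
def w0 : Fin 5 → ℕ := ![1, 1, 1, 0, 0]

/-- The ideal `(s₁,s₂,s₃)`. -/
def Is : Ideal R0 := Ideal.span {X 0, X 1, X 2}

/-- The ideal `(x,y)`. -/
def Ixy : Ideal R0 := Ideal.span {X 3, X 4}

/-! ### Auxiliary definitions -/

/-- `u = s₁ + s₃ y²`. -/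
def u0 : R0 := X 0 + X 2 * X 4 ^ 2

/-- `t = s₂ u`. -/
def t0 : R0 := X 1 * u0

/-- The truncated Catalan generating series evaluated at `t0`. -/
def B0 (n : ℕ) : R0 := ∑ j ∈ Finset.range n, (catalan j : R0) * t0 ^ j

/-- The sequence `xₖ`. -/
def xs0 (k : ℕ) : R0 := X 3 + X 1 * B0 ((k + 1) / 2) * X 4

/-- The sequence `yₖ`. -/
def ys0 (k : ℕ) : R0 :=
  if k = 0 then X 4 else u0 * X 3 + (1 - t0 * B0 (k / 2)) * X 4

/-- The truncated Catalan generating series as an integer polynomial. -/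
def SZ (n : ℕ) : Polynomial ℤ :=
  ∑ j ∈ Finset.range n, (catalan j : Polynomial ℤ) * Polynomial.X ^ j

lemma coeff_SZ (n d : ℕ) :
    (SZ n).coeff d = if d < n then (catalan d : ℤ) else 0 := by
  unfold SZ
  rw [Polynomial.finset_sum_coeff]
  have h : ∀ j ∈ Finset.range n,
      ((catalan j : Polynomial ℤ) * Polynomial.X ^ j).coeff d
        = if j = d then (catalan d : ℤ) else 0 := by
    intro j _
    rw [show (catalan j : Polynomial ℤ) = Polynomial.C (catalan j : ℤ) by
      simp, Polynomial.coeff_C_mul, Polynomial.coeff_X_pow]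
    by_cases hjd : d = j
    · subst hjd; simp
    · simp [hjd, Ne.symm hjd]
  rw [Finset.sum_congr rfl h, Finset.sum_ite_eq' (Finset.range n) d
    (fun _ => (catalan d : ℤ))]
  simp [Finset.mem_range]

lemma L1 (n : ℕ) :
    (Polynomial.X : Polynomial ℤ) ^ (n + 1)
      ∣ SZ (n + 1) - 1 - Polynomial.X * (SZ (n + 1) * SZ n) := by
  rw [Polynomial.X_pow_dvd_iff]
  intro d hd
  simp only [Polynomial.coeff_sub]
  rcases d with _ | e
  · simp [coeff_SZ, Polynomial.mul_coeff_zero]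
  · have he : e + 1 < n + 1 := hd
    rw [Polynomial.coeff_X_mul, Polynomial.coeff_mul, coeff_SZ, if_pos he]
    have hsum : ∀ p ∈ Finset.HasAntidiagonal.antidiagonal e,
        (SZ (n + 1)).coeff p.1 * (SZ n).coeff p.2
          = ((catalan p.1 * catalan p.2 : ℕ) : ℤ) := by
      intro p hp
      have hpe := Finset.HasAntidiagonal.mem_antidiagonal.mp hp
      have h1 : p.1 < n + 1 := by omega
      have h2 : p.2 < n := by omega
      rw [coeff_SZ, coeff_SZ, if_pos h1, if_pos h2]
      push_cast; ring
    rw [Finset.sum_congr rfl hsum, ← Nat.cast_sum, ← catalan_succ']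
    simp [Polynomial.coeff_one]

lemma L2 (n : ℕ) :
    (Polynomial.X : Polynomial ℤ) ^ n ∣ SZ n - 1 - Polynomial.X * (SZ n * SZ n) := by
  cases n with
  | zero => simpa using one_dvd _
  | succ m =>
    have h1 := L1 m
    have hs : SZ (m + 1) = SZ m + (catalan m : Polynomial ℤ) * Polynomial.X ^ m :=
      Finset.sum_range_succ _ _
    have key : SZ (m + 1) - 1 - Polynomial.X * (SZ (m + 1) * SZ (m + 1))
        = (SZ (m + 1) - 1 - Polynomial.X * (SZ (m + 1) * SZ m))
          - ((catalan m : Polynomial ℤ) * SZ (m + 1)) * Polynomial.X ^ (m + 1) := by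
      nth_rewrite 2 [hs]
      ring
    rw [key]
    exact dvd_sub h1 (dvd_mul_left _ _)

lemma aeval_SZ (n : ℕ) : Polynomial.aeval t0 (SZ n) = B0 n := by
  unfold SZ B0
  rw [map_sum]
  refine Finset.sum_congr rfl fun j _ => ?_
  rw [map_mul, map_pow, Polynomial.aeval_X, map_natCast]

lemma dvd1 (n : ℕ) : t0 ^ (n + 1) ∣ B0 (n + 1) - 1 - t0 * (B0 (n + 1) * B0 n) := by
  have := map_dvd (Polynomial.aeval t0 : Polynomial ℤ →ₐ[ℤ] R0) (L1 n)
  simpa [aeval_SZ] using this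

lemma dvd2 (n : ℕ) : t0 ^ n ∣ B0 n - 1 - t0 * (B0 n * B0 n) := by
  have := map_dvd (Polynomial.aeval t0 : Polynomial ℤ →ₐ[ℤ] R0) (L2 n)
  simpa [aeval_SZ] using this

/-! ### Ideal membership helpers -/

lemma X0_mem_Is : (X 0 : R0) ∈ Is := Ideal.subset_span (by simp)
lemma X1_mem_Is : (X 1 : R0) ∈ Is := Ideal.subset_span (by simp)
lemma X2_mem_Is : (X 2 : R0) ∈ Is := Ideal.subset_span (by simp)
lemma X3_mem_Ixy : (X 3 : R0) ∈ Ixy := Ideal.subset_span (by simp)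
lemma X4_mem_Ixy : (X 4 : R0) ∈ Ixy := Ideal.subset_span (by simp)

lemma u0_mem_Is : u0 ∈ Is := by
  unfold u0
  exact add_mem X0_mem_Is (Ideal.mul_mem_right _ _ X2_mem_Is)

lemma t0_mem_Is2 : t0 ∈ Is ^ 2 := by
  rw [sq]
  exact Ideal.mul_mem_mul X1_mem_Is u0_mem_Is

lemma t0_pow_mem (j : ℕ) : t0 ^ j ∈ Is ^ (2 * j) := by
  have := Ideal.pow_mem_pow t0_mem_Is2 j
  rwa [← pow_mul] at this

lemma s2t0_pow_mem (j : ℕ) : (X 1 : R0) * t0 ^ j ∈ Is ^ (2 * j + 1) := by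
  have := Ideal.mul_mem_mul X1_mem_Is (t0_pow_mem j)
  rwa [← pow_succ'] at this

lemma xy_mem_Ixy2 : (X 3 : R0) * X 4 ∈ Ixy ^ 2 := by
  rw [sq]; exact Ideal.mul_mem_mul X3_mem_Ixy X4_mem_Ixy

lemma y2_mem_Ixy2 : (X 4 : R0) ^ 2 ∈ Ixy ^ 2 :=
  Ideal.pow_mem_pow X4_mem_Ixy 2

/-! ### Homogeneity helpers -/

lemma hom_u0 : IsWeightedHomogeneous w0 u0 1 := by
  have h0 : IsWeightedHomogeneous w0 (X 0 : R0) 1 := isWeightedHomogeneous_X ℂ w0 0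
  have h2 : IsWeightedHomogeneous w0 (X 2 : R0) 1 := isWeightedHomogeneous_X ℂ w0 2
  have h4 : IsWeightedHomogeneous w0 (X 4 : R0) 0 := isWeightedHomogeneous_X ℂ w0 4
  have h42 : IsWeightedHomogeneous w0 ((X 4 : R0) ^ 2) 0 := by
    have := h4.mul h4
    rwa [← sq] at this
  exact h0.add (by simpa using h2.mul h42)

lemma hom_t0 : IsWeightedHomogeneous w0 t0 2 := by
  have h1 : IsWeightedHomogeneous w0 (X 1 : R0) 1 := isWeightedHomogeneous_X ℂ w0 1
  exact h1.mul hom_u0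

lemma hom_t0_pow (j : ℕ) : IsWeightedHomogeneous w0 (t0 ^ j) (2 * j) := by
  induction j with
  | zero => simpa using isWeightedHomogeneous_one ℂ w0
  | succ m ih =>
    have h := ih.mul hom_t0
    have e : 2 * (m + 1) = 2 * m + 2 := by ring
    rw [e, pow_succ]
    exact h

lemma hom_natmul {c : ℕ} {p : R0} {d : ℕ} (h : IsWeightedHomogeneous w0 p d) :
    IsWeightedHomogeneous w0 ((c : R0) * p) d := by
  have := (isWeightedHomogeneous_C w0 (c : ℂ)).mul h
  rw [zero_add] at this
  rwa [C_eq_coe_nat] at this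

lemma hom_term (j : ℕ) :
    IsWeightedHomogeneous w0 ((catalan j : R0) * (X 1 * t0 ^ j * X 4)) (2 * j + 1) := by
  apply hom_natmul
  have h1 : IsWeightedHomogeneous w0 (X 1 : R0) 1 := isWeightedHomogeneous_X ℂ w0 1
  have h4 : IsWeightedHomogeneous w0 (X 4 : R0) 0 := isWeightedHomogeneous_X ℂ w0 4
  have h := (h1.mul (hom_t0_pow j)).mul h4
  have e : 1 + 2 * j + 0 = 2 * j + 1 := by omega
  rwa [e] at h

lemma hom_term' (j : ℕ) :
    IsWeightedHomogeneous w0 ((catalan j : R0) * (t0 ^ (j + 1) * X 4)) (2 * j + 2) := by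
  apply hom_natmul
  have h4 : IsWeightedHomogeneous w0 (X 4 : R0) 0 := isWeightedHomogeneous_X ℂ w0 4
  have h := (hom_t0_pow (j + 1)).mul h4
  have e : 2 * (j + 1) + 0 = 2 * j + 2 := by omega
  rwa [e] at h

/-! ### Degree helpers -/

lemma wtd_le_of_hom {p : R0} {d k : ℕ} (h : IsWeightedHomogeneous w0 p d)
    (hdk : d ≤ k) : weightedTotalDegree w0 p ≤ k := by
  unfold weightedTotalDegree
  apply Finset.sup_le
  intro b hb
  rw [h (mem_support_iff.mp hb)]
  exact hdk

lemma wtd_add {p q : R0} {k : ℕ} (hp : weightedTotalDegree w0 p ≤ k)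
    (hq : weightedTotalDegree w0 q ≤ k) : weightedTotalDegree w0 (p + q) ≤ k := by
  unfold weightedTotalDegree at *
  apply Finset.sup_le
  intro b hb
  rcases Finset.mem_union.mp (support_add hb) with h | h
  · exact le_trans (Finset.le_sup h) hp
  · exact le_trans (Finset.le_sup h) hq

lemma wtd_neg {p : R0} {k : ℕ} (h : weightedTotalDegree w0 p ≤ k) :
    weightedTotalDegree w0 (-p) ≤ k := by
  unfold weightedTotalDegree at *
  rwa [MvPolynomial.support_neg]

lemma wtd_sum {ι : Type*} {s : Finset ι} {f : ι → R0} {k : ℕ}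
    (h : ∀ i ∈ s, weightedTotalDegree w0 (f i) ≤ k) :
    weightedTotalDegree w0 (∑ i ∈ s, f i) ≤ k := by
  classical
  induction s using Finset.cons_induction with
  | empty => simp [weightedTotalDegree]
  | cons a s' ha ih =>
    rw [Finset.sum_cons]
    exact wtd_add (h a (Finset.mem_cons_self _ _))
      (ih fun i hi => h i (Finset.mem_cons.2 (Or.inr hi)))

lemma B0_expand (m : ℕ) :
    (X 1 : R0) * B0 m * X 4 = ∑ j ∈ Finset.range m, (catalan j : R0) * (X 1 * t0 ^ j * X 4) := by
  rw [B0, Finset.mul_sum, Finset.sum_mul]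
  exact Finset.sum_congr rfl fun j _ => by ring

lemma tB0_expand (m : ℕ) :
    t0 * B0 m * X 4 = ∑ j ∈ Finset.range m, (catalan j : R0) * (t0 ^ (j + 1) * X 4) := by
  rw [B0, Finset.mul_sum, Finset.sum_mul]
  exact Finset.sum_congr rfl fun j _ => by ring

theorem stmt0 :
    ∃ xs ys : ℕ → R0,
      xs 0 = X 3 ∧ ys 0 = X 4 ∧
      ∀ k : ℕ, 1 ≤ k →
        weightedTotalDegree w0 (xs k) ≤ k ∧ xs k ∈ Ixy ∧
        weightedTotalDegree w0 (ys k) ≤ k ∧ ys k ∈ Ixy ∧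
        xs k - xs (k - 1) ∈ weightedHomogeneousSubmodule ℂ w0 k ∧
        ys k - ys (k - 1) ∈ weightedHomogeneousSubmodule ℂ w0 k ∧
        xs k * ys k - (X 3 * X 4 + X 0 * X 3 ^ 2 + X 1 * X 4 ^ 2 + X 2 * X 3 ^ 2 * X 4 ^ 2)
          ∈ Is ^ (k + 1) ⊓ Ixy ^ 2 := by
  refine ⟨xs0, ys0, ?_, ?_, ?_⟩
  · show X 3 + X 1 * B0 ((0 + 1) / 2) * X 4 = X 3
    norm_num [B0]
  · simp [ys0]
  intro k hk
  have hx3 : IsWeightedHomogeneous w0 (X 3 : R0) 0 := isWeightedHomogeneous_X ℂ w0 3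
  have hx4 : IsWeightedHomogeneous w0 (X 4 : R0) 0 := isWeightedHomogeneous_X ℂ w0 4
  have hkne : k ≠ 0 := by omega
  -- degree of xs
  have hdeg_xs : weightedTotalDegree w0 (xs0 k) ≤ k := by
    rw [xs0, B0_expand]
    apply wtd_add (wtd_le_of_hom hx3 (Nat.zero_le k))
    apply wtd_sum
    intro j hj
    have hj' : j < (k + 1) / 2 := Finset.mem_range.mp hj
    exact wtd_le_of_hom (hom_term j) (by omega)
  -- degree of ys
  have hdeg_ys : weightedTotalDegree w0 (ys0 k) ≤ k := by
    rw [ys0, if_neg hkne]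
    have h1 : weightedTotalDegree w0 (u0 * X 3) ≤ k :=
      wtd_le_of_hom (by simpa using hom_u0.mul hx3) hk
    have h2 : weightedTotalDegree w0 ((1 - t0 * B0 (k / 2)) * X 4) ≤ k := by
      rw [sub_mul, one_mul, sub_eq_add_neg]
      apply wtd_add (wtd_le_of_hom hx4 (Nat.zero_le k))
      apply wtd_neg
      rw [tB0_expand]
      apply wtd_sum
      intro j hj
      have hj' : j < k / 2 := Finset.mem_range.mp hj
      exact wtd_le_of_hom (hom_term' j) (by omega)
    exact wtd_add h1 h2
  -- membership in Ixy
  have hmem_xs : xs0 k ∈ Ixy := by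
    rw [xs0, Ixy, Ideal.mem_span_pair]
    exact ⟨1, X 1 * B0 ((k + 1) / 2), by ring⟩
  have hmem_ys : ys0 k ∈ Ixy := by
    rw [ys0, if_neg hkne, Ixy, Ideal.mem_span_pair]
    exact ⟨u0, 1 - t0 * B0 (k / 2), by ring⟩
  obtain ⟨n, rfl | rfl⟩ : ∃ n, k = 2 * n + 1 ∨ k = 2 * n + 2 := ⟨(k - 1) / 2, by omega⟩ <;>
    clear hk hkne
  all_goals refine ⟨hdeg_xs, hmem_xs, hdeg_ys, hmem_ys, ?_, ?_, ?_⟩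
  -- xs difference, k = 2n+1
  · have e1 : (2 * n + 1 + 1) / 2 = n + 1 := by omega
    have e2 : (2 * n + 1 - 1 + 1) / 2 = n := by omega
    rw [xs0, xs0, e1, e2, mem_weightedHomogeneousSubmodule]
    have hB : B0 (n + 1) = B0 n + (catalan n : R0) * t0 ^ n := Finset.sum_range_succ _ _
    rw [show X 3 + X 1 * B0 (n + 1) * X 4 - (X 3 + X 1 * B0 n * X 4)
        = (catalan n : R0) * (X 1 * t0 ^ n * X 4) by rw [hB]; ring]
    exact hom_term n
  -- ys difference, k = 2n+1
  · rcases Nat.eq_zero_or_pos n with rfl | hn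
    · rw [show (2 * 0 + 1 : ℕ) = 1 by norm_num]
      rw [ys0, ys0]
      norm_num [B0]
      first
      | (rw [mem_weightedHomogeneousSubmodule]; simpa using hom_u0.mul hx3)
      | simpa using hom_u0.mul hx3
    · have e1 : (2 * n + 1) / 2 = n := by omega
      have e2 : (2 * n + 1 - 1) / 2 = n := by omega
      have h1 : (2 * n + 1 : ℕ) ≠ 0 := by omega
      have h2 : (2 * n + 1 - 1 : ℕ) ≠ 0 := by omega
      rw [ys0, ys0, if_neg h1, if_neg h2, e1, e2, sub_self,
        mem_weightedHomogeneousSubmodule]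
      exact isWeightedHomogeneous_zero ℂ w0 _
  -- product, k = 2n+1
  · have e1 : (2 * n + 1 + 1) / 2 = n + 1 := by omega
    have e2 : (2 * n + 1) / 2 = n := by omega
    have h1 : (2 * n + 1 : ℕ) ≠ 0 := by omega
    obtain ⟨r, hr⟩ := dvd1 n
    have hB : B0 (n + 1) = B0 n + (catalan n : R0) * t0 ^ n := Finset.sum_range_succ _ _
    have key : xs0 (2 * n + 1) * ys0 (2 * n + 1)
        - (X 3 * X 4 + X 0 * X 3 ^ 2 + X 1 * X 4 ^ 2 + X 2 * X 3 ^ 2 * X 4 ^ 2)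
        = ((catalan n : R0) * (X 3 * X 4)) * t0 ^ (n + 1)
          + (X 1 * X 4 ^ 2 * r) * t0 ^ (n + 1) := by
      rw [xs0, ys0, if_neg h1, e1, e2, hB]
      rw [hB] at hr
      have hr' : B0 n + (catalan n : R0) * t0 ^ n - 1
          - t0 * ((B0 n + (catalan n : R0) * t0 ^ n) * B0 n) = t0 ^ (n + 1) * r := hr
      unfold t0 u0 at hr' ⊢
      linear_combination (X 1 * X 4 ^ 2) * hr'
    rw [key]
    constructor
    · apply add_mem
      · apply Ideal.mul_mem_left
        have := t0_pow_mem (n + 1)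
        rwa [show 2 * (n + 1) = 2 * n + 1 + 1 by ring] at this
      · apply Ideal.mul_mem_left
        have := t0_pow_mem (n + 1)
        rwa [show 2 * (n + 1) = 2 * n + 1 + 1 by ring] at this
    · apply add_mem
      · rw [show ((catalan n : R0) * (X 3 * X 4)) * t0 ^ (n + 1)
            = ((catalan n : R0) * t0 ^ (n + 1)) * (X 3 * X 4) by ring]
        exact Ideal.mul_mem_left _ _ xy_mem_Ixy2
      · rw [show (X 1 * X 4 ^ 2 * r) * t0 ^ (n + 1)
            = (X 1 * r * t0 ^ (n + 1)) * X 4 ^ 2 by ring]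
        exact Ideal.mul_mem_left _ _ y2_mem_Ixy2
  -- xs difference, k = 2n+2
  · have e1 : (2 * n + 2 + 1) / 2 = n + 1 := by omega
    have e2 : (2 * n + 2 - 1 + 1) / 2 = n + 1 := by omega
    rw [xs0, xs0, e1, e2, sub_self, mem_weightedHomogeneousSubmodule]
    exact isWeightedHomogeneous_zero ℂ w0 _
  -- ys difference, k = 2n+2
  · have e1 : (2 * n + 2) / 2 = n + 1 := by omega
    have e2 : (2 * n + 2 - 1) / 2 = n := by omega
    have h1 : (2 * n + 2 : ℕ) ≠ 0 := by omega
    have h2 : (2 * n + 2 - 1 : ℕ) ≠ 0 := by omega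
    rw [ys0, ys0, if_neg h1, if_neg h2, e1, e2]
    have hB : B0 (n + 1) = B0 n + (catalan n : R0) * t0 ^ n := Finset.sum_range_succ _ _
    rw [show u0 * X 3 + (1 - t0 * B0 (n + 1)) * X 4 - (u0 * X 3 + (1 - t0 * B0 n) * X 4)
        = -((catalan n : R0) * (t0 ^ (n + 1) * X 4)) by rw [hB]; ring]
    apply neg_mem
    rw [mem_weightedHomogeneousSubmodule]
    exact hom_term' n
  -- product, k = 2n+2
  · have e1 : (2 * n + 2 + 1) / 2 = n + 1 := by omega
    have e2 : (2 * n + 2) / 2 = n + 1 := by omega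
    have h1 : (2 * n + 2 : ℕ) ≠ 0 := by omega
    obtain ⟨r, hr⟩ := dvd2 (n + 1)
    have key : xs0 (2 * n + 2) * ys0 (2 * n + 2)
        - (X 3 * X 4 + X 0 * X 3 ^ 2 + X 1 * X 4 ^ 2 + X 2 * X 3 ^ 2 * X 4 ^ 2)
        = (X 4 ^ 2 * r) * (X 1 * t0 ^ (n + 1)) := by
      rw [xs0, ys0, if_neg h1, e1, e2]
      unfold t0 u0 at hr ⊢
      linear_combination (X 1 * X 4 ^ 2) * hr
    rw [key]
    constructor
    · apply Ideal.mul_mem_left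
      have := s2t0_pow_mem (n + 1)
      rwa [show 2 * (n + 1) + 1 = 2 * n + 2 + 1 by ring] at this
    · rw [show (X 4 ^ 2 * r) * (X 1 * t0 ^ (n + 1))
          = (r * X 1 * t0 ^ (n + 1)) * X 4 ^ 2 by ring]
      exact Ideal.mul_mem_left _ _ y2_mem_Ixy2

end
end

section
/- In the formal power series ring C[x,y][[s1,s2,s3]], the element xy + s1·x² + s2·y² + s3·x²y² factors as a product X·Y of two power series X, Y whose constant terms (in the s-variables) are x and y respectively, and all of whose coefficients lie in the ideal (x,y) of C[x,y]. -/
noncomputable section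

/-- The ring `ℂ[x,y]`, with `x = X 0`, `y = X 1`. -/
abbrev Cxy : Type := MvPolynomial (Fin 2) ℂ

/-- The ring `ℂ[x,y][[s₁,s₂,s₃]]`. -/
abbrev A1 : Type := MvPowerSeries (Fin 3) Cxy

def px : Cxy := MvPolynomial.X 0
def py : Cxy := MvPolynomial.X 1


def catP (N : ℕ) : Polynomial ℂ := ∑ n ∈ Finset.range N, Polynomial.C (catalan n : ℂ) * Polynomial.X ^ n

lemma coeff_catP (N k : ℕ) : (catP N).coeff k = if k < N then (catalan k : ℂ) else 0 := by
  simp [catP, Polynomial.finset_sum_coeff, Polynomial.coeff_C_mul, Polynomial.coeff_X_pow]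

def wA : A1 := MvPowerSeries.X 0 + MvPowerSeries.X 2 * MvPowerSeries.C (σ := Fin 3) (R := Cxy) (py ^ 2)
def vA : A1 := MvPowerSeries.X 1 * wA

def SN (N : ℕ) : A1 := Polynomial.aeval vA (catP N)

lemma catP_sub {N M : ℕ} (h : N ≤ M) : ∃ E : Polynomial ℂ,
    catP M = catP N + Polynomial.X ^ N * E := by
  have hd : (Polynomial.X : Polynomial ℂ) ^ N ∣ (catP M - catP N) := by
    rw [Polynomial.X_pow_dvd_iff]
    intro k hk
    simp [coeff_catP, hk, lt_of_lt_of_le hk h]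
  obtain ⟨E, hE⟩ := hd
  exact ⟨E, by linear_combination hE⟩

lemma coeff_vA_pow {d : Fin 3 →₀ ℕ} {n : ℕ} (h : Finsupp.degree d < n) :
    MvPowerSeries.coeff (R := Cxy) d (vA ^ n) = 0 := by
  apply MvPowerSeries.coeff_eq_zero_of_constantCoeff_nilpotent (m := 1)
  · rw [pow_one]; simp [vA]
  · omega

lemma degree_le_of_add {a b d : Fin 3 →₀ ℕ} (h : a + b = d) :
    Finsupp.degree a ≤ Finsupp.degree d := by
  have : Finsupp.degree d = Finsupp.degree a + Finsupp.degree b := by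
    rw [← h]; simp [Finsupp.degree_eq_weight_one, map_add]
  omega

lemma coeff_vA_pow_mul {d : Fin 3 →₀ ℕ} {n : ℕ} (h : Finsupp.degree d < n) (g : A1) :
    MvPowerSeries.coeff (R := Cxy) d (vA ^ n * g) = 0 := by
  rw [MvPowerSeries.coeff_mul]
  apply Finset.sum_eq_zero
  rintro ⟨a, b⟩ hab
  rw [Finset.HasAntidiagonal.mem_antidiagonal] at hab
  rw [coeff_vA_pow (lt_of_le_of_lt (degree_le_of_add hab) h), zero_mul]

lemma coeff_mul_zero_left {d : Fin 3 →₀ ℕ} {g : A1}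
    (hg : ∀ a : Fin 3 →₀ ℕ, Finsupp.degree a ≤ Finsupp.degree d → MvPowerSeries.coeff (R := Cxy) a g = 0)
    (h : A1) : MvPowerSeries.coeff (R := Cxy) d (g * h) = 0 := by
  rw [MvPowerSeries.coeff_mul]
  apply Finset.sum_eq_zero
  rintro ⟨a, b⟩ hab
  rw [Finset.HasAntidiagonal.mem_antidiagonal] at hab
  rw [hg a (degree_le_of_add hab), zero_mul]

lemma SN_stable {d : Fin 3 →₀ ℕ} {N M : ℕ} (hN : Finsupp.degree d < N) (hM : N ≤ M) :
    MvPowerSeries.coeff (R := Cxy) d (SN M) = MvPowerSeries.coeff (R := Cxy) d (SN N) := by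
  obtain ⟨E, hE⟩ := catP_sub hM
  have : SN M = SN N + vA ^ N * Polynomial.aeval vA E := by
    unfold SN
    rw [hE, map_add, map_mul, map_pow, Polynomial.aeval_X]
  rw [this, map_add, coeff_vA_pow_mul hN, add_zero]

/-- The Catalan power series evaluated at vA. -/
def catC : A1 := fun d => MvPowerSeries.coeff (R := Cxy) d (SN (Finsupp.degree d + 1))

lemma coeff_catC (d : Fin 3 →₀ ℕ) :
    MvPowerSeries.coeff (R := Cxy) d catC = MvPowerSeries.coeff (R := Cxy) d (SN (Finsupp.degree d + 1)) := rfl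

lemma coeff_catC_eq {d : Fin 3 →₀ ℕ} {N : ℕ} (hN : Finsupp.degree d < N) :
    MvPowerSeries.coeff (R := Cxy) d catC = MvPowerSeries.coeff (R := Cxy) d (SN N) := by
  rw [coeff_catC]
  rcases le_total N (Finsupp.degree d + 1) with h | h
  · rw [SN_stable hN h]
  · rw [SN_stable (Nat.lt_succ_self _) h]

lemma catP_key (N : ℕ) : ∃ E : Polynomial ℂ,
    1 + Polynomial.X * catP N * catP N = catP N + Polynomial.X ^ N * E := by
  have h : (Polynomial.X : Polynomial ℂ) ^ N ∣ (1 + Polynomial.X * catP N * catP N - catP N) := by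
    rw [Polynomial.X_pow_dvd_iff]
    intro k hk
    rw [mul_assoc]
    rcases k with _ | m
    · simp [coeff_catP, hk]
    · have h1 : (Polynomial.X * (catP N * catP N)).coeff (m+1) = (catP N * catP N).coeff m :=
        Polynomial.coeff_X_mul _ _
      have h2 : (catP N * catP N).coeff m = (catalan (m+1) : ℂ) := by
        rw [Polynomial.coeff_mul]
        have : ∀ ij ∈ Finset.HasAntidiagonal.antidiagonal m,
            (catP N).coeff ij.1 * (catP N).coeff ij.2 = ((catalan ij.1 * catalan ij.2 : ℕ) : ℂ) := by
          rintro ⟨i, j⟩ hij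
          rw [Finset.HasAntidiagonal.mem_antidiagonal] at hij
          have hi : i < N := lt_of_le_of_lt (hij ▸ Nat.le_add_right i j) (Nat.lt_of_succ_lt hk)
          have hj : j < N := lt_of_le_of_lt (hij ▸ Nat.le_add_left j i) (Nat.lt_of_succ_lt hk)
          simp [coeff_catP, hi, hj]
        rw [Finset.sum_congr rfl this, ← Nat.cast_sum, catalan_succ']
      simp [h1, h2, coeff_catP, hk, Polynomial.coeff_one]
  obtain ⟨E, hE⟩ := h
  exact ⟨E, by linear_combination hE⟩

lemma SN_key (N : ℕ) : ∃ E : A1, 1 + vA * SN N * SN N = SN N + vA ^ N * E := by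
  obtain ⟨E, hE⟩ := catP_key N
  refine ⟨Polynomial.aeval vA E, ?_⟩
  have := congrArg (Polynomial.aeval vA) hE
  simpa [map_add, map_mul, map_pow, map_one, SN] using this

lemma catC_eq : catC = 1 + vA * catC * catC := by
  apply MvPowerSeries.ext; intro d
  set N := Finsupp.degree d + 1 with hNdef
  have hN : Finsupp.degree d < N := Nat.lt_succ_self _
  -- replace catC by SN N inside the product
  have hdiff : ∀ a : Fin 3 →₀ ℕ, Finsupp.degree a ≤ Finsupp.degree d →
      MvPowerSeries.coeff (R := Cxy) a (catC - SN N) = 0 := by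
    intro a ha
    rw [map_sub, coeff_catC_eq (lt_of_le_of_lt ha hN), sub_self]
  have hprod : MvPowerSeries.coeff (R := Cxy) d (vA * catC * catC)
      = MvPowerSeries.coeff (R := Cxy) d (vA * SN N * SN N) := by
    have hfac : vA * catC * catC - vA * SN N * SN N
        = (catC - SN N) * (vA * (catC + SN N)) := by ring
    have h0 : MvPowerSeries.coeff (R := Cxy) d (vA * catC * catC - vA * SN N * SN N) = 0 := by
      rw [hfac]; exact coeff_mul_zero_left hdiff _
    rw [map_sub, sub_eq_zero] at h0
    exact h0
  obtain ⟨E, hE⟩ := SN_key N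
  have : MvPowerSeries.coeff (R := Cxy) d (1 + vA * SN N * SN N)
      = MvPowerSeries.coeff (R := Cxy) d (SN N) := by
    rw [hE, map_add, coeff_vA_pow_mul hN, add_zero]
  calc MvPowerSeries.coeff (R := Cxy) d catC = MvPowerSeries.coeff (R := Cxy) d (SN N) := coeff_catC_eq hN
    _ = MvPowerSeries.coeff (R := Cxy) d (1 + vA * SN N * SN N) := this.symm
    _ = MvPowerSeries.coeff (R := Cxy) d (1 + vA * catC * catC) := by
        rw [map_add, map_add, hprod]

theorem stmt1 :
    ∃ Xs Ys : A1,
      Xs * Ys =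
        MvPowerSeries.C (σ := Fin 3) (R := Cxy) (px * py)
          + MvPowerSeries.X 0 * MvPowerSeries.C (σ := Fin 3) (R := Cxy) (px ^ 2)
          + MvPowerSeries.X 1 * MvPowerSeries.C (σ := Fin 3) (R := Cxy) (py ^ 2)
          + MvPowerSeries.X 2 * MvPowerSeries.C (σ := Fin 3) (R := Cxy) (px ^ 2 * py ^ 2) ∧
      MvPowerSeries.constantCoeff (σ := Fin 3) (R := Cxy) Xs = px ∧
      MvPowerSeries.constantCoeff (σ := Fin 3) (R := Cxy) Ys = py ∧
      (∀ d, MvPowerSeries.coeff (R := Cxy) d Xs ∈ Ideal.span {px, py}) ∧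
      (∀ d, MvPowerSeries.coeff (R := Cxy) d Ys ∈ Ideal.span {px, py}) := by
  classical
  set cx := MvPowerSeries.C (σ := Fin 3) (R := Cxy) px with hcx
  set cy := MvPowerSeries.C (σ := Fin 3) (R := Cxy) py with hcy
  refine ⟨cx + cy * (MvPowerSeries.X 1 * catC),
    cy + cx * wA - cy * (vA * catC), ?_, ?_, ?_, ?_, ?_⟩
  · have hC := catC_eq
    simp only [map_mul, map_pow, ← hcx, ← hcy, wA, vA]
    simp only [vA, wA, map_pow, ← hcy] at hC
    linear_combination (MvPowerSeries.X (R := Cxy) 1 * cy ^ 2) * hC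
  · simp [wA, vA, hcx, hcy]
  · simp [wA, vA, hcx, hcy]
  · intro d
    have hpx : px ∈ Ideal.span {px, py} := Ideal.subset_span (by simp)
    have hpy : py ∈ Ideal.span {px, py} := Ideal.subset_span (by simp)
    rw [map_add, hcy, MvPowerSeries.coeff_C_mul]
    refine add_mem ?_ (Ideal.mul_mem_right _ _ hpy)
    rw [hcx, MvPowerSeries.coeff_C]
    split_ifs
    · exact hpx
    · exact zero_mem _
  · intro d
    have hpx : px ∈ Ideal.span {px, py} := Ideal.subset_span (by simp)
    have hpy : py ∈ Ideal.span {px, py} := Ideal.subset_span (by simp)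
    rw [map_sub, map_add, hcy, hcx, MvPowerSeries.coeff_C_mul, MvPowerSeries.coeff_C_mul]
    refine sub_mem (add_mem ?_ (Ideal.mul_mem_right _ _ hpx)) (Ideal.mul_mem_right _ _ hpy)
    rw [MvPowerSeries.coeff_C]
    split_ifs
    · exact hpy
    · exact zero_mem _
end
end

section
/- For every k ∈ N, the two S_k-algebras A_k = S_k[x,y,z,w]/(xy − zw + s4) and B_k = S_k[x,y,z,w]/(xy − zw + s1·x² + s2·y² + s3·x²y² + s4), where S_k = C[s1,s2,s3,s4]/(s1,s2,s3,s4)^{k+1}, are isomorphic as S_k-algebras via an isomorphism that is the identity modulo (s1,s2,s3,s4) and fixes z and w; moreover these isomorphisms can be chosen compatibly under the projections S_k → S_{k−1}. -/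
open MvPolynomial

noncomputable section

/-- The ring `ℂ[s₁,s₂,s₃,s₄,x,y,z,w]`: variables `0,1,2,3 ↦ s₁,s₂,s₃,s₄` and
`4,5,6,7 ↦ x,y,z,w`. -/
abbrev R2 : Type := MvPolynomial (Fin 8) ℂ

/-- The ideal `(s₁,s₂,s₃,s₄)`. -/
def mS : Ideal R2 := Ideal.span {X 0, X 1, X 2, X 3}

/-- `xy - zw + s₄`. -/
def fA : R2 := X 4 * X 5 - X 6 * X 7 + X 3

/-- `xy - zw + s₁x² + s₂y² + s₃x²y² + s₄`. -/
def fB : R2 := X 4 * X 5 - X 6 * X 7 + X 0 * X 4 ^ 2 + X 1 * X 5 ^ 2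
    + X 2 * X 4 ^ 2 * X 5 ^ 2 + X 3

/-- `A_k = S_k[x,y,z,w]/(xy - zw + s₄)` presented as a quotient of `R2`. -/
def IA (k : ℕ) : Ideal R2 := mS ^ (k + 1) ⊔ Ideal.span {fA}

/-- `B_k = S_k[x,y,z,w]/(xy - zw + s₁x² + s₂y² + s₃x²y² + s₄)` presented as a
quotient of `R2`. -/
def IB (k : ℕ) : Ideal R2 := mS ^ (k + 1) ⊔ Ideal.span {fB}

theorem IBle (k : ℕ) : IB (k + 1) ≤ IB k :=
  sup_le_sup_right (Ideal.pow_le_pow_right (by omega)) _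


namespace Aux

/-- `s₃ x y`. -/
def u : R2 := X 2 * (X 4 * X 5)
/-- `s₁ s₂`. -/
def v : R2 := X 0 * X 1

def dd : ℕ → R2
  | 0 => 1
  | (k+1) => dd k * (2 - (1 + u - v * dd k) * dd k)

def gg : ℕ → R2
  | 0 => 1
  | (k+1) => 1 + u - v * dd k

@[simp] lemma dd_zero : dd 0 = 1 := rfl
@[simp] lemma gg_zero : gg 0 = 1 := rfl
lemma dd_succ (k : ℕ) : dd (k+1) = dd k * (2 - (1 + u - v * dd k) * dd k) := rfl
lemma gg_succ (k : ℕ) : gg (k+1) = 1 + u - v * dd k := rfl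

lemma X_mem_mS (i : Fin 8) (h : i.val ≤ 3) : X i ∈ mS := by
  apply Ideal.subset_span
  fin_cases i <;> simp_all

lemma u_mem : u ∈ mS := Ideal.mul_mem_right _ _ (X_mem_mS 2 (by norm_num))

lemma v_mem : v ∈ mS := Ideal.mul_mem_right _ _ (X_mem_mS 0 (by norm_num))

lemma v_mem_sq : v ∈ mS ^ 2 := by
  rw [sq]; exact Ideal.mul_mem_mul (X_mem_mS 0 (by norm_num)) (X_mem_mS 1 (by norm_num))

lemma mem_of_eq {I : Ideal R2} {a b : R2} (h : a = b) (hb : b ∈ I) : a ∈ I := h ▸ hb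

/-- The key invariants for the truncated power series `gg`, `dd`. -/
lemma main_inv (k : ℕ) :
    1 - gg k * dd k ∈ mS ^ (k+1) ∧ gg k + v * dd k - (1 + u) ∈ mS ^ (k+1) := by
  induction k with
  | zero =>
    constructor
    · simp
    · simp only [gg_zero, dd_zero, zero_add, pow_one, mul_one]
      exact mem_of_eq (by ring) (Ideal.sub_mem _ v_mem u_mem)
  | succ k ih =>
    obtain ⟨ih1, ih2⟩ := ih
    have hGd : 1 - gg (k+1) * dd k ∈ mS ^ (k+1) := by
      refine mem_of_eq (b := (1 - gg k * dd k) + (gg k + v * dd k - (1 + u)) * dd k) ?_ ?_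
      · rw [gg_succ]; ring
      · exact Ideal.add_mem _ ih1 (Ideal.mul_mem_right _ _ ih2)
    constructor
    · refine mem_of_eq (b := (1 - gg (k+1) * dd k) * (1 - gg (k+1) * dd k)) ?_ ?_
      · rw [dd_succ, gg_succ]; ring
      · refine SetLike.le_def.mp ?_ (Ideal.mul_mem_mul hGd hGd)
        rw [← pow_add]
        exact Ideal.pow_le_pow_right (by omega)
    · refine mem_of_eq (b := (dd k * (1 - gg (k+1) * dd k)) * v) ?_ ?_
      · rw [dd_succ, gg_succ]; ring
      · rw [pow_succ]
        exact Ideal.mul_mem_mul (Ideal.mul_mem_left _ _ hGd) v_mem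

lemma hGd (k : ℕ) : 1 - gg (k+1) * dd k ∈ mS ^ (k+1) := by
  refine mem_of_eq (b := (1 - gg k * dd k) + (gg k + v * dd k - (1 + u)) * dd k) ?_ ?_
  · rw [gg_succ]; ring
  · exact Ideal.add_mem _ (main_inv k).1 (Ideal.mul_mem_right _ _ (main_inv k).2)

lemma dd_compat (k : ℕ) : dd (k+1) - dd k ∈ mS ^ (k+1) := by
  refine mem_of_eq (b := dd k * (1 - gg (k+1) * dd k)) ?_ ?_
  · rw [dd_succ, gg_succ]; ring
  · exact Ideal.mul_mem_left _ _ (hGd k)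

lemma gg_compat (k : ℕ) : gg (k+1) - gg k ∈ mS ^ (k+1) := by
  cases k with
  | zero =>
    simp only [gg_succ, gg_zero, dd_zero, zero_add, pow_one, mul_one]
    exact mem_of_eq (by ring) (Ideal.sub_mem _ u_mem v_mem)
  | succ k =>
    refine mem_of_eq (b := (dd k - dd (k+1)) * v) ?_ ?_
    · rw [gg_succ, gg_succ]; ring
    · rw [pow_succ]
      refine Ideal.mul_mem_mul ?_ v_mem
      exact mem_of_eq (show dd k - dd (k+1) = -(dd (k+1) - dd k) by ring)
        (neg_mem (dd_compat k))

end Aux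

namespace Aux

lemma gg_one (k : ℕ) : gg k - 1 ∈ mS := by
  cases k with
  | zero => simp
  | succ k =>
    rw [gg_succ]
    exact mem_of_eq (show 1 + u - v * dd k - 1 = u - v * dd k by ring)
      (Ideal.sub_mem _ u_mem (Ideal.mul_mem_right _ _ v_mem))

end Aux

namespace Aux

def FF (k : ℕ) : Fin 8 → R2 := fun i =>
  if i = 4 then gg k * X 4 + X 1 * X 5
  else if i = 5 then X 5 + X 0 * (dd k * X 4)
  else X i

def Φ (k : ℕ) : R2 →ₐ[ℂ] R2 := aeval (FF k)

lemma Φ_X (k : ℕ) (i : Fin 8) : Φ k (X i) = FF k i := aeval_X _ _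

lemma Φ_X4 (k : ℕ) : Φ k (X 4) = gg k * X 4 + X 1 * X 5 := by
  rw [Φ_X]; rfl

lemma Φ_X5 (k : ℕ) : Φ k (X 5) = X 5 + X 0 * (dd k * X 4) := by
  rw [Φ_X]; rfl

lemma Φ_X_other (k : ℕ) (i : Fin 8) (h4 : i ≠ 4) (h5 : i ≠ 5) : Φ k (X i) = X i := by
  rw [Φ_X, FF, if_neg h4, if_neg h5]

lemma ΦX_sub (k : ℕ) (i : Fin 8) : Φ k (X i) - X i ∈ mS := by
  by_cases h4 : i = 4
  · subst h4
    rw [Φ_X4]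
    refine mem_of_eq (b := (gg k - 1) * X 4 + X 1 * X 5) (by ring) ?_
    exact Ideal.add_mem _ (Ideal.mul_mem_right _ _ (gg_one k))
      (Ideal.mul_mem_right _ _ (X_mem_mS 1 (by decide)))
  by_cases h5 : i = 5
  · subst h5
    rw [Φ_X5]
    refine mem_of_eq (b := X 0 * (dd k * X 4)) (by ring) ?_
    exact Ideal.mul_mem_right _ _ (X_mem_mS 0 (by decide))
  · rw [Φ_X_other k _ h4 h5]; simp

lemma Φ_map_mS (k : ℕ) {a : R2} (ha : a ∈ mS) : Φ k a ∈ mS := by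
  have h : Ideal.map (Φ k : R2 →+* R2) mS ≤ mS := by
    rw [Ideal.map_le_iff_le_comap, mS, Ideal.span_le]
    rintro x hx
    simp only [Set.mem_insert_iff, Set.mem_singleton_iff] at hx
    rcases hx with rfl | rfl | rfl | rfl <;>
      · show Φ _ (X _) ∈ mS
        rw [Φ_X_other k _ (by decide) (by decide)]
        exact X_mem_mS _ (by decide)
  exact h (Ideal.mem_map_of_mem _ ha)

lemma Φ_map_mS_pow (k n : ℕ) {a : R2} (ha : a ∈ mS ^ n) : Φ k a ∈ mS ^ n := by
  have h : Ideal.map (Φ k : R2 →+* R2) (mS ^ n) ≤ mS ^ n := by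
    rw [Ideal.map_pow]
    refine Ideal.pow_right_mono ?_ _
    rw [Ideal.map_le_iff_le_comap, mS, Ideal.span_le]
    rintro x hx
    simp only [Set.mem_insert_iff, Set.mem_singleton_iff] at hx
    rcases hx with rfl | rfl | rfl | rfl <;>
      · show Φ _ (X _) ∈ mS
        rw [Φ_X_other k _ (by decide) (by decide)]
        exact X_mem_mS _ (by decide)
  exact h (Ideal.mem_map_of_mem _ ha)

/-- `Φ` is the identity modulo `mS`. -/
lemma Φ_sub_self (k : ℕ) (r : R2) : Φ k r - r ∈ mS := by
  induction r using MvPolynomial.induction_on with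
  | C a => simp
  | add p q hp hq =>
    exact mem_of_eq (show Φ k (p + q) - (p + q)
      = (Φ k p - p) + (Φ k q - q) by rw [map_add]; ring) (Ideal.add_mem _ hp hq)
  | mul_X p i hp =>
    refine mem_of_eq (show Φ k (p * X i) - p * X i
      = Φ k p * (Φ k (X i) - X i) + (Φ k p - p) * X i by rw [map_mul]; ring) ?_
    exact Ideal.add_mem _ (Ideal.mul_mem_left _ _ (ΦX_sub k i))
      (Ideal.mul_mem_right _ _ hp)

/-- `Φ` is the identity modulo `mS²` on `mS`. -/
lemma Φ_sub_self_mS (k : ℕ) {a : R2} (ha : a ∈ mS) : Φ k a - a ∈ mS ^ 2 := by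
  induction ha using Submodule.span_induction with
  | mem x hx =>
    simp only [Set.mem_insert_iff, Set.mem_singleton_iff] at hx
    rcases hx with rfl | rfl | rfl | rfl <;>
      · rw [Φ_X_other k _ (by decide) (by decide)]; simp
  | zero => simp
  | add x y hx hy ihx ihy =>
    exact mem_of_eq (show Φ k (x + y) - (x + y)
      = (Φ k x - x) + (Φ k y - y) by rw [map_add]; ring) (Ideal.add_mem _ ihx ihy)
  | smul r x hx ihx =>
    have hxm : x ∈ mS := hx
    refine mem_of_eq (show Φ k (r • x) - r • x
      = Φ k r * (Φ k x - x) + (Φ k r - r) * x by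
        rw [smul_eq_mul, map_mul]; ring) ?_
    refine Ideal.add_mem _ (Ideal.mul_mem_left _ _ ihx) ?_
    rw [sq]
    exact Ideal.mul_mem_mul (Φ_sub_self k r) hxm

/-- `Φ` is the identity modulo `mS^(n+1)` on `mS^n`. -/
lemma Φ_sub_self_pow (k : ℕ) : ∀ n, ∀ a ∈ mS ^ n, Φ k a - a ∈ mS ^ (n + 1) := by
  intro n
  induction n with
  | zero => intro a _; rw [zero_add, pow_one]; exact Φ_sub_self k a
  | succ n ih =>
    intro a ha
    rw [pow_succ] at ha
    induction ha using Submodule.mul_induction_on' with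
    | mem_mul_mem a hamem b hbmem =>
      refine mem_of_eq (show Φ k (a * b) - a * b
        = (Φ k a - a) * Φ k b + a * (Φ k b - b) by rw [map_mul]; ring) ?_
      refine Ideal.add_mem _ ?_ ?_
      · have h1 : (Φ k a - a) * Φ k b ∈ mS ^ (n+1) * mS :=
          Ideal.mul_mem_mul (ih a hamem) (Φ_map_mS k hbmem)
        rwa [← pow_succ] at h1
      · have h1 : a * (Φ k b - b) ∈ mS ^ n * mS ^ 2 :=
          Ideal.mul_mem_mul hamem (Φ_sub_self_mS k hbmem)
        rw [← pow_add] at h1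
        exact SetLike.le_def.mp (Ideal.pow_le_pow_right (by omega)) h1
    | add x hx y hy ihx ihy =>
      exact mem_of_eq (show Φ k (x + y) - (x + y)
        = (Φ k x - x) + (Φ k y - y) by rw [map_add]; ring) (Ideal.add_mem _ ihx ihy)

/-- compatibility of `Φ` in `k`. -/
lemma Φ_compat (k : ℕ) (r : R2) : Φ (k+1) r - Φ k r ∈ mS ^ (k+1) := by
  have hX : ∀ i : Fin 8, Φ (k+1) (X i) - Φ k (X i) ∈ mS ^ (k+1) := by
    intro i
    by_cases h4 : i = 4
    · subst h4
      rw [Φ_X4, Φ_X4]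
      exact mem_of_eq (show _ = (gg (k+1) - gg k) * X 4 by ring)
        (Ideal.mul_mem_right _ _ (gg_compat k))
    by_cases h5 : i = 5
    · subst h5
      rw [Φ_X5, Φ_X5]
      exact mem_of_eq (show _ = X 0 * ((dd (k+1) - dd k) * X 4) by ring)
        (Ideal.mul_mem_left _ _ (Ideal.mul_mem_right _ _ (dd_compat k)))
    · rw [Φ_X_other _ _ h4 h5, Φ_X_other _ _ h4 h5]
      simp
  induction r using MvPolynomial.induction_on with
  | C a => simp
  | add p q hp hq =>
    exact mem_of_eq (show Φ (k+1) (p + q) - Φ k (p + q)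
      = (Φ (k+1) p - Φ k p) + (Φ (k+1) q - Φ k q) by rw [map_add, map_add]; ring)
      (Ideal.add_mem _ hp hq)
  | mul_X p i hp =>
    refine mem_of_eq (show Φ (k+1) (p * X i) - Φ k (p * X i)
      = Φ (k+1) p * (Φ (k+1) (X i) - Φ k (X i)) + (Φ (k+1) p - Φ k p) * Φ k (X i) by
        rw [map_mul, map_mul]; ring) ?_
    exact Ideal.add_mem _ (Ideal.mul_mem_left _ _ (hX i)) (Ideal.mul_mem_right _ _ hp)

/-- The key computation : `Φ k fA ≡ fB mod mS^(k+1)`. -/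
lemma Φ_fA (k : ℕ) : Φ k fA - fB ∈ mS ^ (k+1) := by
  have hval : Φ k fA = (gg k * X 4 + X 1 * X 5) * (X 5 + X 0 * (dd k * X 4))
      - X 6 * X 7 + X 3 := by
    simp only [fA, map_sub, map_add, map_mul, Φ_X4, Φ_X5]
    rw [Φ_X_other k 6 (by decide) (by decide), Φ_X_other k 7 (by decide) (by decide),
      Φ_X_other k 3 (by decide) (by decide)]
  refine mem_of_eq (b := (gg k + v * dd k - (1 + u)) * (X 4 * X 5)
      + X 0 * ((gg k * dd k - 1) * X 4 ^ 2)) ?_ ?_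
  · rw [hval, fB, u, v]; ring
  · refine Ideal.add_mem _ (Ideal.mul_mem_right _ _ (main_inv k).2) ?_
    refine Ideal.mul_mem_left _ _ (Ideal.mul_mem_right _ _ ?_)
    exact mem_of_eq (show gg k * dd k - 1 = -(1 - gg k * dd k) by ring)
      (neg_mem (main_inv k).1)

end Aux

namespace Aux

/-- `Φ` descends to the quotient modulo `mS^(k+1)`. -/
def Φbar (k : ℕ) : (R2 ⧸ mS ^ (k+1)) →ₐ[ℂ] (R2 ⧸ mS ^ (k+1)) :=
  Ideal.quotientMapₐ (mS ^ (k+1)) (Φ k) (fun _a ha => Φ_map_mS_pow k (k+1) ha)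

lemma Φbar_mk (k : ℕ) (r : R2) :
    Φbar k (Ideal.Quotient.mk (mS ^ (k+1)) r) = Ideal.Quotient.mk (mS ^ (k+1)) (Φ k r) := rfl

lemma Φbar_inj (k : ℕ) : Function.Injective (Φbar k) := by
  have key : ∀ m : ℕ, ∀ a : R2 ⧸ mS ^ (k+1), Φbar k a = 0 →
      ∃ e ∈ mS ^ m, a = Ideal.Quotient.mk (mS ^ (k+1)) e := by
    intro m
    induction m with
    | zero =>
      intro a _
      obtain ⟨e, rfl⟩ := Ideal.Quotient.mk_surjective a
      exact ⟨e, by simp, rfl⟩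
    | succ m ih =>
      intro a h0
      obtain ⟨e, he, rfl⟩ := ih a h0
      have hΦe : Φ k e ∈ mS ^ (k+1) := by
        rw [Φbar_mk, Ideal.Quotient.eq_zero_iff_mem] at h0
        exact h0
      refine ⟨e - Φ k e, ?_, ?_⟩
      · exact mem_of_eq (show e - Φ k e = -(Φ k e - e) by ring)
          (neg_mem (Φ_sub_self_pow k m e he))
      · rw [map_sub, Ideal.Quotient.eq_zero_iff_mem.mpr hΦe, sub_zero]
  intro a b hab
  obtain ⟨e, he, heq⟩ := key (k+1) (a - b) (by rw [map_sub, hab, sub_self])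
  have : Ideal.Quotient.mk (mS ^ (k+1)) e = 0 := Ideal.Quotient.eq_zero_iff_mem.mpr he
  rw [this] at heq
  exact sub_eq_zero.mp heq

lemma Φbar_surj (k : ℕ) : Function.Surjective (Φbar k) := by
  have key : ∀ m : ℕ, ∀ b : R2 ⧸ mS ^ (k+1), ∃ a, ∃ e ∈ mS ^ m,
      b = Φbar k a + Ideal.Quotient.mk (mS ^ (k+1)) e := by
    intro m
    induction m with
    | zero =>
      intro b
      obtain ⟨e, rfl⟩ := Ideal.Quotient.mk_surjective b
      exact ⟨0, e, by simp, by simp⟩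
    | succ m ih =>
      intro b
      obtain ⟨a, e, he, hb⟩ := ih b
      refine ⟨a + Ideal.Quotient.mk (mS ^ (k+1)) e, e - Φ k e, ?_, ?_⟩
      · exact mem_of_eq (show e - Φ k e = -(Φ k e - e) by ring)
          (neg_mem (Φ_sub_self_pow k m e he))
      · rw [map_add, Φbar_mk, map_sub, hb]
        ring
  intro b
  obtain ⟨a, e, he, hb⟩ := key (k+1) b
  refine ⟨a, ?_⟩
  rw [hb, Ideal.Quotient.eq_zero_iff_mem.mpr he, add_zero]

/-- The induced automorphism of `R2 ⧸ mS^(k+1)`. -/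
def Φequiv (k : ℕ) : (R2 ⧸ mS ^ (k+1)) ≃ₐ[ℂ] (R2 ⧸ mS ^ (k+1)) :=
  AlgEquiv.ofBijective (Φbar k) ⟨Φbar_inj k, Φbar_surj k⟩

def JA (k : ℕ) : Ideal (R2 ⧸ mS ^ (k+1)) :=
  (Ideal.span {fA}).map (Ideal.Quotient.mkₐ ℂ (mS ^ (k+1)))

def JB (k : ℕ) : Ideal (R2 ⧸ mS ^ (k+1)) :=
  (Ideal.span {fB}).map (Ideal.Quotient.mkₐ ℂ (mS ^ (k+1)))

lemma Jmap (k : ℕ) : JB k = (JA k).map (Φequiv k : (R2 ⧸ mS ^ (k+1)) →+* (R2 ⧸ mS ^ (k+1))) := by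
  have h1 : (Φequiv k : (R2 ⧸ mS ^ (k+1)) →+* (R2 ⧸ mS ^ (k+1)))
      ((Ideal.Quotient.mkₐ ℂ (mS ^ (k+1))) fA) = (Ideal.Quotient.mkₐ ℂ (mS ^ (k+1))) fB := by
    show Ideal.Quotient.mk (mS ^ (k+1)) (Φ k fA) = Ideal.Quotient.mk (mS ^ (k+1)) fB
    rw [Ideal.Quotient.mk_eq_mk_iff_sub_mem]
    exact Φ_fA k
  rw [JA, JB, Ideal.map_span, Ideal.map_span, Set.image_singleton, Set.image_singleton,
    Ideal.map_span, Set.image_singleton, h1]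

/-- The desired isomorphism `R2 ⧸ IA k ≃ R2 ⧸ IB k`. -/
def phi (k : ℕ) : (R2 ⧸ IA k) ≃ₐ[ℂ] (R2 ⧸ IB k) :=
  (Ideal.quotientEquivAlgOfEq ℂ (show IA k = mS ^ (k+1) ⊔ Ideal.span {fA} from rfl)).trans <|
    (((DoubleQuot.quotQuotEquivQuotSupₐ ℂ (mS ^ (k+1)) (Ideal.span {fA})).symm.trans <|
      (Ideal.quotientEquivAlg (JA k) (JB k) (Φequiv k) (Jmap k)).trans
        (DoubleQuot.quotQuotEquivQuotSupₐ ℂ (mS ^ (k+1)) (Ideal.span {fB}))).trans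
      (Ideal.quotientEquivAlgOfEq ℂ (show mS ^ (k+1) ⊔ Ideal.span {fB} = IB k from rfl)))

lemma phi_mk (k : ℕ) (r : R2) :
    phi k (Ideal.Quotient.mk (IA k) r) = Ideal.Quotient.mk (IB k) (Φ k r) := rfl

end Aux


theorem stmt2 :
    ∃ φ : ∀ k : ℕ, (R2 ⧸ IA k) ≃ₐ[ℂ] (R2 ⧸ IB k),
      -- `φ k` is `S_k`-linear, i.e. it fixes the classes of `s₁,s₂,s₃,s₄`
      (∀ k : ℕ, ∀ i : Fin 8, i.val ≤ 3 →
        φ k (Ideal.Quotient.mk (IA k) (X i)) = Ideal.Quotient.mk (IB k) (X i)) ∧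
      -- `φ k` fixes `z` and `w`
      (∀ k : ℕ, φ k (Ideal.Quotient.mk (IA k) (X 6)) = Ideal.Quotient.mk (IB k) (X 6)) ∧
      (∀ k : ℕ, φ k (Ideal.Quotient.mk (IA k) (X 7)) = Ideal.Quotient.mk (IB k) (X 7)) ∧
      -- `φ k` is the identity modulo `(s₁,s₂,s₃,s₄)`
      (∀ k : ℕ, ∀ i : Fin 8,
        φ k (Ideal.Quotient.mk (IA k) (X i)) - Ideal.Quotient.mk (IB k) (X i)
          ∈ mS.map (Ideal.Quotient.mk (IB k))) ∧
      -- the isomorphisms are compatible with the projections `S_{k+1} → S_k`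
      (∀ k : ℕ, ∀ r : R2,
        Ideal.Quotient.factor (IBle k)
            (φ (k + 1) (Ideal.Quotient.mk (IA (k + 1)) r))
          = φ k (Ideal.Quotient.mk (IA k) r)) := by
  refine ⟨Aux.phi, ?_, ?_, ?_, ?_, ?_⟩
  · intro k i hi
    have h4 : i ≠ 4 := by rintro rfl; exact absurd hi (by decide)
    have h5 : i ≠ 5 := by rintro rfl; exact absurd hi (by decide)
    rw [Aux.phi_mk, Aux.Φ_X_other k i h4 h5]
  · intro k
    rw [Aux.phi_mk, Aux.Φ_X_other k 6 (by decide) (by decide)]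
  · intro k
    rw [Aux.phi_mk, Aux.Φ_X_other k 7 (by decide) (by decide)]
  · intro k i
    rw [Aux.phi_mk, ← map_sub]
    exact Ideal.mem_map_of_mem _ (Aux.ΦX_sub k i)
  · intro k r
    rw [Aux.phi_mk, Aux.phi_mk, Ideal.Quotient.factor_mk,
      Ideal.Quotient.mk_eq_mk_iff_sub_mem]
    exact Ideal.mem_sup_left (Aux.Φ_compat k r)
end
end

section
/- The group of matrices g ∈ GL_3(Z) satisfying g(P) = P, where P = conv{±(1,0,0), ±(0,1,0), ±(0,0,1), ±(1,1,0), ±(1,0,1)}, has order 16 and is generated by the matrices g1 = [[-1,1,1],[0,1,0],[0,0,1]], g2 = [[1,0,0],[0,0,1],[0,1,0]], g3 = [[1,-1,0],[0,0,1],[0,-1,0]]; moreover g1 and g2 have order 2 and g3 has order 4, and the group is isomorphic to a semidirect product D8 ⋊ C2. -/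
open Matrix

/-- The ten vertices `±(1,0,0), ±(0,1,0), ±(0,0,1), ±(1,1,0), ±(1,0,1)`. -/
def V8 : Set (Fin 3 → ℝ) :=
  {![1,0,0], ![0,1,0], ![0,0,1], ![1,1,0], ![1,0,1],
   -![1,0,0], -![0,1,0], -![0,0,1], -![1,1,0], -![1,0,1]}

/-- The polytope `P`. -/
def P8 : Set (Fin 3 → ℝ) := convexHull ℝ V8

def M1 : Matrix (Fin 3) (Fin 3) ℤ := !![-1,1,1; 0,1,0; 0,0,1]
def M2 : Matrix (Fin 3) (Fin 3) ℤ := !![1,0,0; 0,0,1; 0,1,0]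
def M3 : Matrix (Fin 3) (Fin 3) ℤ := !![1,-1,0; 0,0,1; 0,-1,0]
def M3inv : Matrix (Fin 3) (Fin 3) ℤ := !![1,0,-1; 0,0,-1; 0,1,0]

def g1 : Matrix.GeneralLinearGroup (Fin 3) ℤ :=
  ⟨M1, M1, by norm_num [M1, Matrix.mul_fin_three] <;> exact Matrix.one_fin_three.symm,
    by norm_num [M1, Matrix.mul_fin_three] <;> exact Matrix.one_fin_three.symm⟩

def g2 : Matrix.GeneralLinearGroup (Fin 3) ℤ :=
  ⟨M2, M2, by norm_num [M2, Matrix.mul_fin_three] <;> exact Matrix.one_fin_three.symm,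
    by norm_num [M2, Matrix.mul_fin_three] <;> exact Matrix.one_fin_three.symm⟩

def g3 : Matrix.GeneralLinearGroup (Fin 3) ℤ :=
  ⟨M3, M3inv, by norm_num [M3, M3inv, Matrix.mul_fin_three] <;> exact Matrix.one_fin_three.symm,
    by norm_num [M3, M3inv, Matrix.mul_fin_three] <;> exact Matrix.one_fin_three.symm⟩

/-- `g ∈ GL₃(ℤ)` preserves `P`, acting on `ℝ³` via the cast of its matrix. -/
def PreservesP (g : Matrix.GeneralLinearGroup (Fin 3) ℤ) : Prop :=
  (fun v : Fin 3 → ℝ => ((g : Matrix (Fin 3) (Fin 3) ℤ).map (Int.cast : ℤ → ℝ)).mulVec v) '' P8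
    = P8


abbrev GL3 := Matrix.GeneralLinearGroup (Fin 3) ℤ
def fmap (g : GL3) : (Fin 3 → ℝ) → (Fin 3 → ℝ) :=
  fun v => ((g : Matrix (Fin 3) (Fin 3) ℤ).map (Int.cast : ℤ → ℝ)).mulVec v

def ι (v : Fin 3 → ℤ) : Fin 3 → ℝ := fun i => (v i : ℝ)

def VZ : List (Fin 3 → ℤ) := [![1,0,0], ![0,1,0], ![0,0,1], ![1,1,0], ![1,0,1],
  ![-1,0,0], ![0,-1,0], ![0,0,-1], ![-1,-1,0], ![-1,0,-1]]

lemma V8_eq_iota : ∀ v ∈ V8, ∃ w ∈ VZ, v = ι w := by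
  intro v hv
  simp only [V8, Set.mem_insert_iff, Set.mem_singleton_iff] at hv
  rcases hv with rfl|rfl|rfl|rfl|rfl|rfl|rfl|rfl|rfl|rfl
  · exact ⟨![1,0,0], by decide, by funext i; fin_cases i <;> norm_num [ι]⟩
  · exact ⟨![0,1,0], by decide, by funext i; fin_cases i <;> norm_num [ι]⟩
  · exact ⟨![0,0,1], by decide, by funext i; fin_cases i <;> norm_num [ι]⟩
  · exact ⟨![1,1,0], by decide, by funext i; fin_cases i <;> norm_num [ι]⟩
  · exact ⟨![1,0,1], by decide, by funext i; fin_cases i <;> norm_num [ι]⟩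
  · exact ⟨![-1,0,0], by decide, by funext i; fin_cases i <;> norm_num [ι]⟩
  · exact ⟨![0,-1,0], by decide, by funext i; fin_cases i <;> norm_num [ι]⟩
  · exact ⟨![0,0,-1], by decide, by funext i; fin_cases i <;> norm_num [ι]⟩
  · exact ⟨![-1,-1,0], by decide, by funext i; fin_cases i <;> norm_num [ι]⟩
  · exact ⟨![-1,0,-1], by decide, by funext i; fin_cases i <;> norm_num [ι]⟩

lemma iota_mem_V8 : ∀ w ∈ VZ, ι w ∈ V8 := by
  intro w hw
  fin_cases hw <;>
  · simp only [V8, Set.mem_insert_iff, Set.mem_singleton_iff]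
    norm_num [ι, funext_iff, Fin.forall_fin_succ]

lemma hsInt (a0 a1 a2 c : ℤ)
    (h : ∀ w ∈ VZ, a0 * w 0 + a1 * w 1 + a2 * w 2 ≤ c) :
    ∀ x ∈ P8, (a0:ℝ) * x 0 + (a1:ℝ) * x 1 + (a2:ℝ) * x 2 ≤ (c:ℝ) := by
  intro x hx
  have hlin : IsLinearMap ℝ (fun x : Fin 3 → ℝ => (a0:ℝ) * x 0 + (a1:ℝ) * x 1 + (a2:ℝ) * x 2) := by
    constructor
    · intro u v; simp only [Pi.add_apply]; ring
    · intro c v; simp only [Pi.smul_apply, smul_eq_mul]; ring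
  have hcvx : Convex ℝ {x : Fin 3 → ℝ | (a0:ℝ) * x 0 + (a1:ℝ) * x 1 + (a2:ℝ) * x 2 ≤ (c:ℝ)} :=
    convex_halfSpace_le hlin _
  have hsub : V8 ⊆ {x : Fin 3 → ℝ | (a0:ℝ) * x 0 + (a1:ℝ) * x 1 + (a2:ℝ) * x 2 ≤ (c:ℝ)} := by
    intro v hv
    obtain ⟨w, hwVZ, rfl⟩ := V8_eq_iota v hv
    have := h w hwVZ
    simp only [Set.mem_setOf_eq, ι]
    push_cast
    exact_mod_cast this
  exact convexHull_min hsub hcvx hx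

lemma fmap_iota (g : GL3) (v : Fin 3 → ℤ) :
    fmap g (ι v) = ι ((g : Matrix (Fin 3) (Fin 3) ℤ).mulVec v) := by
  funext i
  simp [fmap, ι, Matrix.mulVec, dotProduct, Fin.sum_univ_three, Matrix.map_apply]

lemma vec3_eta (w : Fin 3 → ℤ) : ![w 0, w 1, w 2] = w := by
  funext i; fin_cases i <;> rfl

lemma step2 (g : GL3) (hg : PreservesP g) :
    ∀ v ∈ VZ, (g : Matrix (Fin 3) (Fin 3) ℤ).mulVec v ∈ VZ := by
  intro v hv
  obtain ⟨w, hwdef⟩ : ∃ w, w = (g : Matrix (Fin 3) (Fin 3) ℤ).mulVec v := ⟨_, rfl⟩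
  rw [← hwdef]
  have hwP : ι w ∈ P8 := by
    have h1 : ι v ∈ P8 := subset_convexHull ℝ V8 (iota_mem_V8 v hv)
    have h2 : fmap g (ι v) ∈ (fun v : Fin 3 → ℝ =>
        ((g : Matrix (Fin 3) (Fin 3) ℤ).map (Int.cast : ℤ → ℝ)).mulVec v) '' P8 :=
      Set.mem_image_of_mem _ h1
    rw [hg] at h2
    rw [fmap_iota] at h2; rwa [← hwdef] at h2
  -- linear inequalities
  have I : ∀ (a0 a1 a2 c : ℤ), (∀ u ∈ VZ, a0 * u 0 + a1 * u 1 + a2 * u 2 ≤ c) →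
      a0 * w 0 + a1 * w 1 + a2 * w 2 ≤ c := by
    intro a0 a1 a2 c h
    have := hsInt a0 a1 a2 c h (ι w) hwP
    simp only [ι] at this
    exact_mod_cast this
  have i01 := I 1 0 0 1 (by decide)
  have i02 := I (-1) 0 0 1 (by decide)
  have i03 := I 0 1 0 1 (by decide)
  have i04 := I 0 (-1) 0 1 (by decide)
  have i05 := I 0 0 1 1 (by decide)
  have i06 := I 0 0 (-1) 1 (by decide)
  have i07 := I (-1) 1 1 1 (by decide)
  have i08 := I 1 (-1) (-1) 1 (by decide)
  have i09 := I 1 (-1) 0 1 (by decide)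
  have i10 := I (-1) 1 0 1 (by decide)
  have i11 := I 1 0 (-1) 1 (by decide)
  have i12 := I (-1) 0 1 1 (by decide)
  have i13 := I 0 1 (-1) 1 (by decide)
  have i14 := I 0 (-1) 1 1 (by decide)
  have i15 := I 0 1 1 1 (by decide)
  have i16 := I 0 (-1) (-1) 1 (by decide)
  have i17 := I 1 (-2) 1 2 (by decide)
  have i18 := I (-1) 2 (-1) 2 (by decide)
  have i19 := I 1 2 (-1) 3 (by decide)
  have i20 := I (-1) (-2) 1 3 (by decide)
  -- w ≠ 0
  have hwne : ¬ (w 0 = 0 ∧ w 1 = 0 ∧ w 2 = 0) := by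
    rintro ⟨h0, h1, h2⟩
    have hw0 : w = 0 := by funext i; fin_cases i <;> assumption
    have hv0 : v = 0 := by
      have : (g⁻¹ : GL3).val.mulVec ((g : Matrix (Fin 3) (Fin 3) ℤ).mulVec v) = v := by
        rw [Matrix.mulVec_mulVec, ← Units.val_mul, inv_mul_cancel, Units.val_one,
          Matrix.one_mulVec]
      rw [← hwdef, hw0, Matrix.mulVec_zero] at this
      exact this.symm
    rw [hv0] at hv
    revert hv; decide
  have h0 : w 0 = -1 ∨ w 0 = 0 ∨ w 0 = 1 := by omega
  have h1 : w 1 = -1 ∨ w 1 = 0 ∨ w 1 = 1 := by omega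
  have h2 : w 2 = -1 ∨ w 2 = 0 ∨ w 2 = 1 := by omega
  rcases h0 with h0|h0|h0 <;> rcases h1 with h1|h1|h1 <;> rcases h2 with h2|h2|h2 <;>
    first
    | (rw [← vec3_eta w, h0, h1, h2]; decide)
    | omega

def ML : List (Matrix (Fin 3) (Fin 3) ℤ) := [!![1,0,0; 0,1,0; 0,0,1],
  !![1,0,-1; 0,1,0; 0,0,-1],
  !![1,0,0; 0,0,1; 0,1,0],
  !![1,0,-1; 0,0,-1; 0,1,0],
  !![1,-1,0; 0,-1,0; 0,0,1],
  !![1,-1,-1; 0,-1,0; 0,0,-1],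
  !![1,-1,0; 0,0,1; 0,-1,0],
  !![1,-1,-1; 0,0,-1; 0,-1,0],
  !![-1,1,1; 0,1,0; 0,0,1],
  !![-1,1,0; 0,1,0; 0,0,-1],
  !![-1,1,1; 0,0,1; 0,1,0],
  !![-1,1,0; 0,0,-1; 0,1,0],
  !![-1,0,1; 0,-1,0; 0,0,1],
  !![-1,0,0; 0,-1,0; 0,0,-1],
  !![-1,0,1; 0,0,1; 0,-1,0],
  !![-1,0,0; 0,0,-1; 0,-1,0]]

set_option maxRecDepth 40000 in
lemma enum0 : ∀ c0 ∈ VZ, ∀ c1 ∈ VZ, ∀ c2 ∈ VZ,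
    (c0 + c1) ∈ VZ → (c0 + c2) ∈ VZ →
    (∀ i : Fin 3, ¬(c0 i = 0 ∧ c1 i = 0 ∧ c2 i = 0)) →
    !![c0 0, c1 0, c2 0; c0 1, c1 1, c2 1; c0 2, c1 2, c2 2] ∈ ML := by decide

lemma matrix_mem_ML (g : GL3) (hg : PreservesP g) :
    (g : Matrix (Fin 3) (Fin 3) ℤ) ∈ ML := by
  have s := step2 g hg
  obtain ⟨A, hAdef⟩ : ∃ A, A = (g : Matrix (Fin 3) (Fin 3) ℤ) := ⟨_, rfl⟩
  have col : ∀ j : Fin 3, A.mulVec (fun k => if k = j then 1 else 0) = fun i => A i j := by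
    intro j; funext i
    fin_cases j <;>
      simp [Matrix.mulVec, dotProduct, Fin.sum_univ_three]
  have e0 : (fun k : Fin 3 => if k = 0 then (1:ℤ) else 0) = ![1,0,0] := by
    funext k; fin_cases k <;> rfl
  have e1 : (fun k : Fin 3 => if k = 1 then (1:ℤ) else 0) = ![0,1,0] := by
    funext k; fin_cases k <;> rfl
  have e2 : (fun k : Fin 3 => if k = 2 then (1:ℤ) else 0) = ![0,0,1] := by
    funext k; fin_cases k <;> rfl
  have hc0 : (fun i => A i 0) ∈ VZ := by
    rw [← col 0, e0, hAdef]; exact s _ (by decide)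
  have hc1 : (fun i => A i 1) ∈ VZ := by
    rw [← col 1, e1, hAdef]; exact s _ (by decide)
  have hc2 : (fun i => A i 2) ∈ VZ := by
    rw [← col 2, e2, hAdef]; exact s _ (by decide)
  have hs01 : ((fun i => A i 0) + fun i => A i 1) ∈ VZ := by
    have : ((fun i => A i 0) + fun i => A i 1) = A.mulVec ![1,1,0] := by
      funext i; simp [Matrix.mulVec, dotProduct, Fin.sum_univ_three]
    rw [this, hAdef]; exact s _ (by decide)
  have hs02 : ((fun i => A i 0) + fun i => A i 2) ∈ VZ := by
    have : ((fun i => A i 0) + fun i => A i 2) = A.mulVec ![1,0,1] := by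
      funext i; simp [Matrix.mulVec, dotProduct, Fin.sum_univ_three]
    rw [this, hAdef]; exact s _ (by decide)
  have hrow : ∀ i : Fin 3, ¬((fun i => A i 0) i = 0 ∧ (fun i => A i 1) i = 0 ∧
      (fun i => A i 2) i = 0) := by
    rintro i ⟨z0, z1, z2⟩
    simp only at z0 z1 z2
    have h1 : (A * (g⁻¹ : GL3).val) i i = 1 := by
      rw [hAdef, ← Units.val_mul, mul_inv_cancel, Units.val_one, Matrix.one_apply_eq]
    rw [Matrix.mul_apply, Fin.sum_univ_three, z0, z1, z2] at h1
    simp at h1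
  have := enum0 _ hc0 _ hc1 _ hc2 hs01 hs02 hrow
  rw [← hAdef, Matrix.eta_fin_three A]
  exact this

lemma val_g1 : (g1 : Matrix (Fin 3) (Fin 3) ℤ) = M1 := rfl
lemma val_g2 : (g2 : Matrix (Fin 3) (Fin 3) ℤ) = M2 := rfl
lemma val_g3 : (g3 : Matrix (Fin 3) (Fin 3) ℤ) = M3 := rfl
lemma val_g1inv : ((g1⁻¹ : GL3) : Matrix (Fin 3) (Fin 3) ℤ) = M1 := rfl
lemma val_g2inv : ((g2⁻¹ : GL3) : Matrix (Fin 3) (Fin 3) ℤ) = M2 := rfl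
lemma val_g3inv : ((g3⁻¹ : GL3) : Matrix (Fin 3) (Fin 3) ℤ) = M3inv := rfl

lemma fmap_image_hull (u : GL3) : fmap u '' P8 = convexHull ℝ (fmap u '' V8) := by
  have h : fmap u = ⇑(Matrix.mulVecLin
      ((u : Matrix (Fin 3) (Fin 3) ℤ).map (Int.cast : ℤ → ℝ))) := by
    funext v; simp [fmap, Matrix.mulVecLin_apply]
  rw [P8, h, LinearMap.image_convexHull]

lemma fmap_comp_self (u : GL3) (x : Fin 3 → ℝ) : fmap u (fmap u⁻¹ x) = x := by
  simp only [fmap, Matrix.mulVec_mulVec]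
  have : ((u : Matrix (Fin 3) (Fin 3) ℤ).map (Int.cast : ℤ → ℝ)) *
      (((u⁻¹ : GL3) : Matrix (Fin 3) (Fin 3) ℤ).map (Int.cast : ℤ → ℝ)) = 1 := by
    have hc : (Int.cast : ℤ → ℝ) = ⇑(Int.castRingHom ℝ) := rfl
    rw [hc, ← Matrix.map_mul, ← Units.val_mul, mul_inv_cancel, Units.val_one]
    exact Matrix.map_one _ (by norm_num) (by norm_num)
  rw [this, Matrix.one_mulVec]

lemma presOf (u : GL3) (h : ∀ v ∈ V8, fmap u v ∈ V8)
    (h' : ∀ v ∈ V8, fmap u⁻¹ v ∈ V8) : PreservesP u := by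
  have key : ∀ (w : GL3), (∀ v ∈ V8, fmap w v ∈ V8) → fmap w '' P8 ⊆ P8 := by
    intro w hw
    rw [fmap_image_hull]
    refine (convexHull_min ?_ (convex_convexHull ℝ V8))
    rintro x ⟨v, hv, rfl⟩
    exact subset_convexHull ℝ V8 (hw v hv)
  show fmap u '' P8 = P8
  refine Set.Subset.antisymm (key u h) ?_
  intro x hx
  refine ⟨fmap u⁻¹ x, key u⁻¹ h' ⟨x, hx, rfl⟩, fmap_comp_self u x⟩


set_option maxHeartbeats 2000000

lemma hp1 : PreservesP g1 := by
  refine presOf g1 ?_ ?_ <;>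
  · intro v hv
    simp only [V8, Set.mem_insert_iff, Set.mem_singleton_iff] at hv ⊢
    rcases hv with rfl|rfl|rfl|rfl|rfl|rfl|rfl|rfl|rfl|rfl <;>
    · simp only [fmap, val_g1, val_g1inv]
      norm_num [M1, Matrix.mulVec, dotProduct,
        Fin.sum_univ_three, Matrix.map_apply, funext_iff, Fin.forall_fin_succ,
          Matrix.cons_val_two, Matrix.tail_cons, Matrix.head_cons]

lemma hp2 : PreservesP g2 := by
  refine presOf g2 ?_ ?_ <;>
  · intro v hv
    simp only [V8, Set.mem_insert_iff, Set.mem_singleton_iff] at hv ⊢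
    rcases hv with rfl|rfl|rfl|rfl|rfl|rfl|rfl|rfl|rfl|rfl <;>
    · simp only [fmap, val_g2, val_g2inv]
      norm_num [M2, Matrix.mulVec, dotProduct,
        Fin.sum_univ_three, Matrix.map_apply, funext_iff, Fin.forall_fin_succ,
          Matrix.cons_val_two, Matrix.tail_cons, Matrix.head_cons]

lemma hp3 : PreservesP g3 := by
  refine presOf g3 ?_ ?_ <;>
  · intro v hv
    simp only [V8, Set.mem_insert_iff, Set.mem_singleton_iff] at hv ⊢
    rcases hv with rfl|rfl|rfl|rfl|rfl|rfl|rfl|rfl|rfl|rfl <;>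
    · simp only [fmap, val_g3, val_g3inv]
      norm_num [M3, M3inv, Matrix.mulVec, dotProduct,
        Fin.sum_univ_three, Matrix.map_apply, funext_iff, Fin.forall_fin_succ,
          Matrix.cons_val_two, Matrix.tail_cons, Matrix.head_cons]


def Spg : Subgroup GL3 where
  carrier := {g | PreservesP g}
  one_mem' := by
    show fmap 1 '' P8 = P8
    have : fmap (1 : GL3) = id := by
      funext v
      show ((1 : GL3).val.map (Int.cast : ℤ → ℝ)).mulVec v = v
      rw [Units.val_one, Matrix.map_one _ (by norm_num) (by norm_num), Matrix.one_mulVec]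
    rw [this, Set.image_id]
  mul_mem' := by
    intro a b ha hb
    have ha' : fmap a '' P8 = P8 := ha
    have hb' : fmap b '' P8 = P8 := hb
    show fmap (a * b) '' P8 = P8
    have h2 : fmap (a * b) = fmap a ∘ fmap b := by
      funext v
      have hc : (Int.cast : ℤ → ℝ) = ⇑(Int.castRingHom ℝ) := rfl
      simp only [Function.comp_apply, fmap, Matrix.mulVec_mulVec, Units.val_mul, hc,
        Matrix.map_mul]
    rw [h2, Set.image_comp, hb', ha']
  inv_mem' := by
    intro a ha
    have ha' : fmap a '' P8 = P8 := ha
    show fmap a⁻¹ '' P8 = P8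
    conv_lhs => rw [← ha']
    rw [← Set.image_comp]
    have h2 : fmap a⁻¹ ∘ fmap a = id := by
      funext v
      have := fmap_comp_self a⁻¹ v
      rwa [inv_inv] at this
    rw [h2, Set.image_id]

def LW : List GL3 := [1, g3*g2, g2, g2*g3*g2, g2*g3, g3*g3, g3, g2*g3*g3, g1, g1*g3*g2,
  g1*g2, g1*g2*g3*g2, g1*g2*g3, g1*g3*g3, g1*g3, g1*g2*g3*g3]

lemma mem_LW (g : GL3) (hg : PreservesP g) : g ∈ LW := by
  have h := matrix_mem_ML g hg
  simp only [ML, List.mem_cons, List.not_mem_nil, or_false] at h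
  rcases h with h|h|h|h|h|h|h|h|h|h|h|h|h|h|h|h
  · rw [show g = 1 from Units.ext (h.trans (by decide))]; decide
  · rw [show g = g3*g2 from Units.ext (h.trans (by decide))]; decide
  · rw [show g = g2 from Units.ext (h.trans (by decide))]; decide
  · rw [show g = g2*g3*g2 from Units.ext (h.trans (by decide))]; decide
  · rw [show g = g2*g3 from Units.ext (h.trans (by decide))]; decide
  · rw [show g = g3*g3 from Units.ext (h.trans (by decide))]; decide
  · rw [show g = g3 from Units.ext (h.trans (by decide))]; decide
  · rw [show g = g2*g3*g3 from Units.ext (h.trans (by decide))]; decide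
  · rw [show g = g1 from Units.ext (h.trans (by decide))]; decide
  · rw [show g = g1*g3*g2 from Units.ext (h.trans (by decide))]; decide
  · rw [show g = g1*g2 from Units.ext (h.trans (by decide))]; decide
  · rw [show g = g1*g2*g3*g2 from Units.ext (h.trans (by decide))]; decide
  · rw [show g = g1*g2*g3 from Units.ext (h.trans (by decide))]; decide
  · rw [show g = g1*g3*g3 from Units.ext (h.trans (by decide))]; decide
  · rw [show g = g1*g3 from Units.ext (h.trans (by decide))]; decide
  · rw [show g = g1*g2*g3*g3 from Units.ext (h.trans (by decide))]; decide

lemma LW_subset_closure :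
    ∀ x ∈ LW, x ∈ Subgroup.closure ({g1, g2, g3} : Set GL3) := by
  have m1 : g1 ∈ Subgroup.closure ({g1, g2, g3} : Set GL3) :=
    Subgroup.subset_closure (by simp)
  have m2 : g2 ∈ Subgroup.closure ({g1, g2, g3} : Set GL3) :=
    Subgroup.subset_closure (by simp)
  have m3 : g3 ∈ Subgroup.closure ({g1, g2, g3} : Set GL3) :=
    Subgroup.subset_closure (by simp)
  intro x hx
  fin_cases hx
  · exact one_mem _
  · exact mul_mem m3 m2
  · exact m2
  · exact mul_mem (mul_mem m2 m3) m2
  · exact mul_mem m2 m3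
  · exact mul_mem m3 m3
  · exact m3
  · exact mul_mem (mul_mem m2 m3) m3
  · exact m1
  · exact mul_mem (mul_mem m1 m3) m2
  · exact mul_mem m1 m2
  · exact mul_mem (mul_mem (mul_mem m1 m2) m3) m2
  · exact mul_mem (mul_mem m1 m2) m3
  · exact mul_mem (mul_mem m1 m3) m3
  · exact mul_mem m1 m3
  · exact mul_mem (mul_mem (mul_mem m1 m2) m3) m3


lemma closure_le_Spg : Subgroup.closure ({g1, g2, g3} : Set GL3) ≤ Spg := by
  rw [Subgroup.closure_le]
  rintro x hx
  simp only [Set.mem_insert_iff, Set.mem_singleton_iff] at hx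
  rcases hx with rfl|rfl|rfl
  · exact hp1
  · exact hp2
  · exact hp3

lemma hSet : {g : GL3 | PreservesP g} = ↑(Subgroup.closure ({g1, g2, g3} : Set GL3)) := by
  apply Set.Subset.antisymm
  · intro g hg; exact LW_subset_closure g (mem_LW g hg)
  · intro g hg; exact closure_le_Spg hg

lemma hSetLW : {g : GL3 | PreservesP g} = {x : GL3 | x ∈ LW} := by
  apply Set.Subset.antisymm
  · intro g hg; exact mem_LW g hg
  · intro g hg; exact closure_le_Spg (LW_subset_closure g hg)

lemma ncardS : ({g : GL3 | PreservesP g}).ncard = 16 := by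
  have h1 : {g : GL3 | PreservesP g} = ↑LW.toFinset := by
    rw [hSetLW]; ext x; simp [List.mem_toFinset]
  rw [h1, Set.ncard_coe_finset]
  decide

lemma card16 : Nat.card {g : GL3 // PreservesP g} = 16 := by
  have := Nat.card_coe_set_eq {g : GL3 | PreservesP g}
  rw [ncardS] at this
  exact this

lemma card_closure : Nat.card (Subgroup.closure ({g1, g2, g3} : Set GL3)) = 16 := by
  calc Nat.card (Subgroup.closure ({g1, g2, g3} : Set GL3))
      = ((Subgroup.closure ({g1, g2, g3} : Set GL3) : Subgroup GL3) : Set GL3).ncard :=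
        Nat.card_coe_set_eq _
    _ = ({g : GL3 | PreservesP g}).ncard := by rw [hSet]
    _ = 16 := ncardS

lemma ord1 : orderOf g1 = 2 := by
  haveI : Fact (Nat.Prime 2) := ⟨Nat.prime_two⟩
  exact orderOf_eq_prime (by decide) (by decide)

lemma ord2 : orderOf g2 = 2 := by
  haveI : Fact (Nat.Prime 2) := ⟨Nat.prime_two⟩
  exact orderOf_eq_prime (by decide) (by decide)

lemma ord3 : orderOf g3 = 4 := by
  haveI : Fact (Nat.Prime 2) := ⟨Nat.prime_two⟩
  have h := orderOf_eq_prime_pow (x := g3) (p := 2) (n := 1) (by decide) (by decide)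
  exact h.trans (by norm_num)


def Rr : GL3 := g3
def Ss : GL3 := g3 * g2
def Zc : GL3 := g1 * g3 * g3

def fD : DihedralGroup 4 → GL3
  | .r i => Rr ^ i.val
  | .sr i => Ss * Rr ^ i.val

lemma fD_mul : ∀ x y : DihedralGroup 4, fD (x * y) = fD x * fD y := by decide

def fDh : DihedralGroup 4 →* GL3 := MonoidHom.mk' fD fD_mul

def fZ : Multiplicative (ZMod 2) → GL3 := fun c => Zc ^ (c.toAdd.val)

lemma fZ_mul : ∀ x y : Multiplicative (ZMod 2), fZ (x * y) = fZ x * fZ y := by decide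

def fZh : Multiplicative (ZMod 2) →* GL3 := MonoidHom.mk' fZ fZ_mul

def φ0 : Multiplicative (ZMod 2) →* MulAut (DihedralGroup 4) := 1

lemma comm_fZ_fD : ∀ c x, fZ c * fD x = fD x * fZ c := by decide

lemma compat : ∀ c, fDh.comp ((φ0 c).toMonoidHom) =
    (MulAut.conj (fZh c)).toMonoidHom.comp fDh := by
  intro c
  refine MonoidHom.ext fun x => ?_
  show fDh ((φ0 c) x) = fZh c * fDh x * (fZh c)⁻¹
  have h1 : (φ0 c) x = x := rfl
  rw [h1, show (fZh c * fDh x : GL3) = fDh x * fZh c from comm_fZ_fD c x, mul_assoc,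
    mul_inv_cancel, mul_one]

def ψ : (DihedralGroup 4 ⋊[φ0] Multiplicative (ZMod 2)) →* GL3 :=
  SemidirectProduct.lift fDh fZh compat

def eprod : (DihedralGroup 4 ⋊[φ0] Multiplicative (ZMod 2)) ≃
    (DihedralGroup 4 × Multiplicative (ZMod 2)) where
  toFun x := (x.left, x.right)
  invFun p := ⟨p.1, p.2⟩
  left_inv x := rfl
  right_inv p := rfl

lemma hrange : ψ.range = Subgroup.closure ({g1, g2, g3} : Set GL3) := by
  have m1 : g1 ∈ Subgroup.closure ({g1, g2, g3} : Set GL3) :=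
    Subgroup.subset_closure (by simp)
  have m2 : g2 ∈ Subgroup.closure ({g1, g2, g3} : Set GL3) :=
    Subgroup.subset_closure (by simp)
  have m3 : g3 ∈ Subgroup.closure ({g1, g2, g3} : Set GL3) :=
    Subgroup.subset_closure (by simp)
  apply le_antisymm
  · rintro x ⟨y, rfl⟩
    rw [← SemidirectProduct.inl_left_mul_inr_right y, _root_.map_mul]
    have hl : ψ (SemidirectProduct.inl y.left) = fD y.left := SemidirectProduct.lift_inl _ _ _ _
    have hr : ψ (SemidirectProduct.inr y.right) = fZ y.right := SemidirectProduct.lift_inr _ _ _ _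
    rw [hl, hr]
    refine mul_mem ?_ ?_
    · cases y.left with
      | r i => exact pow_mem m3 _
      | sr i => exact mul_mem (mul_mem m3 m2) (pow_mem m3 _)
    · exact pow_mem (mul_mem (mul_mem m1 m3) m3) _
  · rw [Subgroup.closure_le]
    rintro x hx
    simp only [Set.mem_insert_iff, Set.mem_singleton_iff] at hx
    rcases hx with rfl|rfl|rfl
    · exact ⟨⟨DihedralGroup.r 2, Multiplicative.ofAdd 1⟩, by decide⟩
    · exact ⟨⟨DihedralGroup.sr 1, 1⟩, by decide⟩
    · exact ⟨⟨DihedralGroup.r 1, 1⟩, by decide⟩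

instance : Fintype (DihedralGroup 4 ⋊[φ0] Multiplicative (ZMod 2)) :=
  Fintype.ofEquiv _ eprod.symm

lemma card_sd : Nat.card (DihedralGroup 4 ⋊[φ0] Multiplicative (ZMod 2)) = 16 := by
  rw [Nat.card_congr eprod, Nat.card_eq_fintype_card]
  decide

lemma final_iso : Nonempty ((Subgroup.closure ({g1, g2, g3} : Set GL3) :
    Subgroup GL3) ≃* (DihedralGroup 4 ⋊[φ0] Multiplicative (ZMod 2))) := by
  have hcard2 : Nat.card (DihedralGroup 4 ⋊[φ0] Multiplicative (ZMod 2)) =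
      Nat.card ψ.range := by
    rw [card_sd, hrange, card_closure]
  have hbij : Function.Bijective ψ.rangeRestrict :=
    (Nat.bijective_iff_surjective_and_card _).mpr ⟨ψ.rangeRestrict_surjective, hcard2⟩
  exact ⟨(MulEquiv.subgroupCongr hrange.symm).trans
    (MulEquiv.ofBijective ψ.rangeRestrict hbij).symm⟩

theorem stmt8 :
    Nat.card {g : Matrix.GeneralLinearGroup (Fin 3) ℤ // PreservesP g} = 16 ∧
    {g : Matrix.GeneralLinearGroup (Fin 3) ℤ | PreservesP g}
      = ↑(Subgroup.closure {g1, g2, g3}) ∧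
    orderOf g1 = 2 ∧ orderOf g2 = 2 ∧ orderOf g3 = 4 ∧
    (∃ φ : Multiplicative (ZMod 2) →* MulAut (DihedralGroup 4),
      Nonempty ((Subgroup.closure {g1, g2, g3} :
          Subgroup (Matrix.GeneralLinearGroup (Fin 3) ℤ))
        ≃* (DihedralGroup 4 ⋊[φ] Multiplicative (ZMod 2)))) := by
  exact ⟨card16, hSet, ord1, ord2, ord3, ⟨φ0, final_iso⟩⟩
end
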